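/- Let G be a topological group and let Λ be a subgroup of G. Suppose G has a basis 𝒰 of open neighborhoods of the identity such that each U ∈ 𝒰 is a subgroup of G that is contained in Λ and normal in Λ. Then every left Cauchy filter on G is a right Cauchy filter: if ℱ is a proper filter on G such that for every U ∈ 𝒰 there exists F ∈ ℱ with x⁻¹y ∈ U for all x,y ∈ F, then for every U ∈ 𝒰 there exists F′ ∈ ℱ with xy⁻¹ ∈ U for all x,y ∈ F′. -/

import Mathlib

theorem stmt2 {G : Type*} [Group G] [TopologicalSpace G] [IsTopologicalGroup G]
    (Λ : Subgroup G) (𝒰 : Set (Subgroup G))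
    (hopen : ∀ U ∈ 𝒰, IsOpen (U : Set G))
    (hsub : ∀ U ∈ 𝒰, U ≤ Λ)
    (hnormal : ∀ U ∈ 𝒰, ∀ x ∈ Λ, ∀ u ∈ U, x * u * x⁻¹ ∈ U)
    (hbasis : (nhds (1 : G)).HasBasis (fun U : Subgroup G => U ∈ 𝒰) (fun U => (U : Set G)))
    (ℱ : Filter G) [ℱ.NeBot]
    (hleft : ∀ U ∈ 𝒰, ∃ F ∈ ℱ, ∀ x ∈ F, ∀ y ∈ F, x⁻¹ * y ∈ (U : Set G)) :
    ∀ U ∈ 𝒰, ∃ F ∈ ℱ, ∀ x ∈ F, ∀ y ∈ F, x * y⁻¹ ∈ (U : Set G) := by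
  intro U hU
  obtain ⟨F, hF, hFc⟩ := hleft U hU
  obtain ⟨x₀, hx₀⟩ := ℱ.nonempty_of_mem hF
  have hUnhds : (U : Set G) ∈ nhds (1 : G) := (hopen U hU).mem_nhds U.one_mem
  have hcont : Continuous fun g : G => x₀ * g * x₀⁻¹ := by continuity
  have hpre : {g : G | x₀ * g * x₀⁻¹ ∈ (U : Set G)} ∈ nhds (1 : G) := by
    have h := hcont.tendsto (1 : G)
    exact h (by simpa using hUnhds)
  obtain ⟨V, hV, hVU⟩ := hbasis.mem_iff.mp hpre
  obtain ⟨F₁, hF₁, hF₁c⟩ := hleft V hV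
  refine ⟨F ∩ F₁, Filter.inter_mem hF hF₁, ?_⟩
  rintro x ⟨hxF, hxF₁⟩ y ⟨hyF, hyF₁⟩
  have ha : x₀⁻¹ * x ∈ U := hFc x₀ hx₀ x hxF
  have hv : y⁻¹ * x ∈ V := hF₁c y hyF₁ x hxF₁
  have hconj : (x₀⁻¹ * x) * (y⁻¹ * x) * (x₀⁻¹ * x)⁻¹ ∈ V :=
    hnormal V hV _ (hsub U hU ha) _ hv
  have hmem : x₀ * ((x₀⁻¹ * x) * (y⁻¹ * x) * (x₀⁻¹ * x)⁻¹) * x₀⁻¹ ∈ (U : Set G) := hVU hconj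
  have heq : x * y⁻¹ = x₀ * ((x₀⁻¹ * x) * (y⁻¹ * x) * (x₀⁻¹ * x)⁻¹) * x₀⁻¹ := by group
  rw [heq]; exact hmem
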